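/- Suppose 3 ≤ e_j ≤ N for all j, and suppose a_j < α + x < a_{j-1} for some j. Then for any η with 0 < η < (4N)^{-2}, one has α + xη < a_j; i.e., α + x and α + xη lie in distinct intervals of the partition {(a_j, a_{j-1})}. -/

import Mathlib

open Filter Topology

lemma aux_grow (e m : ℕ → ℤ) (N : ℤ)
    (he : ∀ j, 1 ≤ j → 3 ≤ e j ∧ e j ≤ N)
    (hm0 : m 0 = 0) (hm1 : m 1 = 1)
    (hm : ∀ j, 1 ≤ j → m (j + 1) = e j * m j - m (j - 1)) :
    ∀ j, 1 ≤ j → 0 < m j ∧ 2 * m j ≤ m (j + 1) := by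
  intro j hj
  induction j, hj using Nat.le_induction with
  | base =>
    have h2 := hm 1 le_rfl
    simp only [hm1, hm0, show (1:ℕ) - 1 = 0 from rfl, mul_one, sub_zero] at h2
    have := (he 1 le_rfl).1
    omega
  | succ j hj ih =>
    obtain ⟨h1, h2⟩ := ih
    have hr := hm (j+1) (by omega)
    simp only [Nat.add_sub_cancel] at hr
    have he' := (he (j+1) (by omega)).1
    have hp : 0 < m (j+1) := by omega
    have : 3 * m (j+1) ≤ e (j+1) * m (j+1) := by nlinarith
    constructor
    · omega
    · omega

lemma aux_two (e m : ℕ → ℤ) (N : ℤ)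
    (he : ∀ j, 1 ≤ j → 3 ≤ e j ∧ e j ≤ N)
    (hm0 : m 0 = 0) (hm1 : m 1 = 1)
    (hm : ∀ j, 1 ≤ j → m (j + 1) = e j * m j - m (j - 1)) :
    ∀ j, 2 * m j ≤ m (j + 1) := by
  intro j
  cases j with
  | zero => rw [hm0, hm1]; norm_num
  | succ k => exact (aux_grow e m N he hm0 hm1 hm (k+1) (by omega)).2

lemma aux_det (m n e : ℕ → ℤ)
    (hm0 : m 0 = 0) (hn0 : n 0 = -1) (hm1 : m 1 = 1) (hn1 : n 1 = 0)
    (hm : ∀ j, 1 ≤ j → m (j + 1) = e j * m j - m (j - 1))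
    (hn : ∀ j, 1 ≤ j → n (j + 1) = e j * n j - n (j - 1)) :
    ∀ j, n (j + 1) * m j - n j * m (j + 1) = 1 := by
  intro j
  induction j with
  | zero => rw [hm0, hn0, hm1, hn1]; ring
  | succ k ih =>
    have hm' := hm (k+1) (by omega)
    have hn' := hn (k+1) (by omega)
    simp only [Nat.add_sub_cancel] at hm' hn'
    rw [hm', hn']
    linear_combination ih

section
variable (e m : ℕ → ℤ) (N : ℤ)
    (he : ∀ j, 1 ≤ j → 3 ≤ e j ∧ e j ≤ N)
    (hm0 : m 0 = 0) (hm1 : m 1 = 1)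
    (hm : ∀ j, 1 ≤ j → m (j + 1) = e j * m j - m (j - 1))

include he hm0 hm1 hm

lemma aux_nonneg : ∀ j, 0 ≤ m j := by
  intro j
  cases j with
  | zero => omega
  | succ k => exact (aux_grow e m N he hm0 hm1 hm (k+1) (by omega)).1.le

lemma aux_N : ∀ j, 1 ≤ j → m (j + 1) ≤ N * m j := by
  intro j hj
  have hr := hm j hj
  have ⟨he3, heN⟩ := he j hj
  have hp : 0 < m j := (aux_grow e m N he hm0 hm1 hm j hj).1
  have hnn : 0 ≤ m (j - 1) := aux_nonneg e m N he hm0 hm1 hm (j-1)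
  nlinarith

lemma aux_five : ∀ i, 5 * m (i + 2) ≤ 2 * m (i + 3) := by
  intro i
  have hr := hm (i+2) (by omega)
  have hr' : m (i + 3) = e (i + 2) * m (i + 2) - m (i + 1) := hr
  have ⟨he3, _⟩ := he (i+2) (by omega)
  have h2 : 2 * m (i+1) ≤ m (i+2) := aux_two e m N he hm0 hm1 hm (i+1)
  have hp : 0 < m (i+2) := (aux_grow e m N he hm0 hm1 hm (i+2) (by omega)).1
  nlinarith [hr']

lemma aux_mk : ∀ j : ℕ, 1 ≤ j → (j : ℤ) ≤ m j := by
  intro j hj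
  induction j, hj using Nat.le_induction with
  | base => rw [hm1]; norm_num
  | succ j hj ih =>
    have ⟨h1, h2⟩ := aux_grow e m N he hm0 hm1 hm j hj
    push_cast
    omega

lemma aux_pmono : ∀ k, m (k + 1) - m k ≤ m (k + 2) - m (k + 1) := by
  intro k
  have h2 : 2 * m (k+1) ≤ m (k+2) := aux_two e m N he hm0 hm1 hm (k+1)
  have hnn := aux_nonneg e m N he hm0 hm1 hm k
  omega

lemma aux_ppos : ∀ k, 0 < m (k + 1) - m k := by
  intro k
  cases k with
  | zero => show 0 < m 1 - m 0; omega
  | succ i =>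
    have h2 : 2 * m (i+1) ≤ m (i+2) := aux_two e m N he hm0 hm1 hm (i+1)
    have hp := (aux_grow e m N he hm0 hm1 hm (i+1) (by omega)).1
    show 0 < m (i+2) - m (i+1)
    omega
end


theorem stmt19 (e m n : ℕ → ℤ) (N : ℤ) (a : ℕ → ℝ) (α : ℝ)
    (he : ∀ j, 1 ≤ j → 3 ≤ e j ∧ e j ≤ N)
    (hm0 : m 0 = 0) (hn0 : n 0 = -1) (hm1 : m 1 = 1) (hn1 : n 1 = 0)
    (hm : ∀ j, 1 ≤ j → m (j + 1) = e j * m j - m (j - 1))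
    (hn : ∀ j, 1 ≤ j → n (j + 1) = e j * n j - n (j - 1))
    (ha : ∀ j, a j = ((n (j + 1) : ℝ) - (n j : ℝ)) / ((m (j + 1) : ℝ) - (m j : ℝ)))
    (hα : Tendsto (fun j => (n j : ℝ) / (m j : ℝ)) atTop (nhds α)) :
    ∀ j, 1 ≤ j → ∀ x : ℝ, 0 < x → a j < α + x → α + x < a (j - 1) →
      ∀ t : ℝ, 0 < t → t < (4 * (N : ℝ))⁻¹ ^ 2 → α + x * t < a j := by
  intro j hj x hx hax hxa t ht htN
  obtain ⟨i, rfl⟩ : ∃ i, j = i + 1 := ⟨j - 1, by omega⟩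
  simp only [Nat.add_sub_cancel] at hxa
  -- integer facts
  have hgrow := aux_grow e m N he hm0 hm1 hm
  have htwo := aux_two e m N he hm0 hm1 hm
  have hdet := aux_det m n e hm0 hn0 hm1 hn1 hm hn
  have hnn := aux_nonneg e m N he hm0 hm1 hm
  have hNle := aux_N e m N he hm0 hm1 hm
  have hfive := aux_five e m N he hm0 hm1 hm
  have hmk := aux_mk e m N he hm0 hm1 hm
  have hppos := aux_ppos e m N he hm0 hm1 hm
  have hpmono := aux_pmono e m N he hm0 hm1 hm
  -- real versions
  have Mpos : ∀ k, 1 ≤ k → (0:ℝ) < (m k : ℝ) := fun k hk => by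
    exact_mod_cast (hgrow k hk).1
  have Mne : ∀ k, 1 ≤ k → ((m k : ℝ)) ≠ 0 := fun k hk => (Mpos k hk).ne'
  have Ppos : ∀ k, (0:ℝ) < (m (k+1) : ℝ) - (m k : ℝ) := fun k => by
    have := hppos k; exact_mod_cast this
  have Pmono : ∀ J K : ℕ, J ≤ K →
      (m (J+1):ℝ) - (m J:ℝ) ≤ (m (K+1):ℝ) - (m K:ℝ) := by
    intro J K hJK
    induction K, hJK using Nat.le_induction with
    | base => exact le_rfl
    | succ K hK ih =>
      refine ih.trans ?_
      have := hpmono K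
      exact_mod_cast this
  have detR : ∀ k, (n (k+1):ℝ) * (m k:ℝ) - (n k:ℝ) * (m (k+1):ℝ) = 1 := fun k => by
    exact_mod_cast hdet k
  have hstep : ∀ k, 1 ≤ k → (n (k+1):ℝ)/(m (k+1):ℝ) - (n k:ℝ)/(m k:ℝ)
      = 1/((m k:ℝ) * (m (k+1):ℝ)) := by
    intro k hk
    rw [div_sub_div _ _ (Mne (k+1) (by omega)) (Mne k hk),
      show (n (k+1):ℝ) * (m k:ℝ) - (m (k+1):ℝ) * (n k:ℝ) = 1 from by
        linear_combination detR k,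
      mul_comm ((m (k+1):ℝ)) ((m k:ℝ))]
  have hmono : ∀ J, 1 ≤ J → ∀ K, J ≤ K → (n J:ℝ)/(m J:ℝ) ≤ (n K:ℝ)/(m K:ℝ) := by
    intro J hJ K hK
    induction K, hK using Nat.le_induction with
    | base => exact le_rfl
    | succ K hK ih =>
      refine ih.trans ?_
      have hd := hstep K (hJ.trans hK)
      have hpos : (0:ℝ) < (m K:ℝ) * (m (K+1):ℝ) :=
        mul_pos (Mpos K (hJ.trans hK)) (Mpos (K+1) (by omega))
      have : (0:ℝ) ≤ 1/((m K:ℝ) * (m (K+1):ℝ)) := by positivity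
      linarith
  have hbound : ∀ J, 1 ≤ J → ∀ K, J ≤ K → (n K:ℝ)/(m K:ℝ)
      ≤ (n J:ℝ)/(m J:ℝ) + (1/(m J:ℝ) - 1/(m K:ℝ))/((m (J+1):ℝ) - (m J:ℝ)) := by
    intro J hJ K hK
    induction K, hK using Nat.le_induction with
    | base => simp
    | succ K hK ih =>
      have h1K : 1 ≤ K := hJ.trans hK
      have hd := hstep K h1K
      have heq : 1/((m K:ℝ) * (m (K+1):ℝ))
          = (1/(m K:ℝ) - 1/(m (K+1):ℝ))/((m (K+1):ℝ) - (m K:ℝ)) := by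
        rw [eq_div_iff (Ppos K).ne']
        field_simp
        rw [div_sub_div _ _ (Mne K h1K) (Mne (K+1) (by omega)), one_mul, mul_one]
      have hnum : (0:ℝ) ≤ 1/(m K:ℝ) - 1/(m (K+1):ℝ) := by
        rw [sub_nonneg]
        apply one_div_le_one_div_of_le (Mpos K h1K)
        linarith [Ppos K]
      have hle2 : (1/(m K:ℝ) - 1/(m (K+1):ℝ))/((m (K+1):ℝ) - (m K:ℝ))
          ≤ (1/(m K:ℝ) - 1/(m (K+1):ℝ))/((m (J+1):ℝ) - (m J:ℝ)) :=
        div_le_div_of_nonneg_left hnum (Ppos J) (Pmono J K hK)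
      have hcomb : (1/(m J:ℝ) - 1/(m K:ℝ))/((m (J+1):ℝ) - (m J:ℝ))
          + (1/(m K:ℝ) - 1/(m (K+1):ℝ))/((m (J+1):ℝ) - (m J:ℝ))
          = (1/(m J:ℝ) - 1/(m (K+1):ℝ))/((m (J+1):ℝ) - (m J:ℝ)) := by ring
      linarith
  -- limit facts
  have hMtop : Tendsto (fun K => (m K : ℝ)) atTop atTop := by
    apply tendsto_atTop_mono' atTop ?_ tendsto_natCast_atTop_atTop
    filter_upwards [eventually_ge_atTop 1] with K hK
    exact_mod_cast hmk K hK
  have hinv : Tendsto (fun K => 1/(m K:ℝ)) atTop (nhds 0) := by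
    simp only [one_div]; exact hMtop.inv_tendsto_atTop
  have hge : ∀ J, 1 ≤ J → (n J:ℝ)/(m J:ℝ) ≤ α := by
    intro J hJ
    apply ge_of_tendsto hα
    filter_upwards [eventually_ge_atTop J] with K hK
    exact hmono J hJ K hK
  have hαle : ∀ J, 1 ≤ J → α ≤ (n J:ℝ)/(m J:ℝ)
      + 1/((m J:ℝ) * ((m (J+1):ℝ) - (m J:ℝ))) := by
    intro J hJ
    have hRlim : Tendsto (fun K => (n J:ℝ)/(m J:ℝ)
        + (1/(m J:ℝ) - 1/(m K:ℝ))/((m (J+1):ℝ) - (m J:ℝ))) atTop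
        (nhds ((n J:ℝ)/(m J:ℝ) + (1/(m J:ℝ) - 0)/((m (J+1):ℝ) - (m J:ℝ)))) :=
      tendsto_const_nhds.add ((tendsto_const_nhds.sub hinv).div_const _)
    have hev : (fun K => (n K:ℝ)/(m K:ℝ)) ≤ᶠ[atTop] fun K => (n J:ℝ)/(m J:ℝ)
        + (1/(m J:ℝ) - 1/(m K:ℝ))/((m (J+1):ℝ) - (m J:ℝ)) := by
      filter_upwards [eventually_ge_atTop J] with K hK
      exact hbound J hJ K hK
    have h := le_of_tendsto_of_tendsto hα hRlim hev
    rwa [sub_zero, div_div] at h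
  -- a formula
  have hAf : ∀ k, a k - (n (k+1):ℝ)/(m (k+1):ℝ)
      = 1/(((m (k+1):ℝ) - (m k:ℝ)) * (m (k+1):ℝ)) := by
    intro k
    rw [ha k, div_sub_div _ _ (Ppos k).ne' (Mne (k+1) (by omega))]
    congr 1
    linear_combination detR k
  -- key estimates
  have hM1pos : (0:ℝ) < (m (i+1):ℝ) := Mpos (i+1) (by omega)
  have hM2pos : (0:ℝ) < (m (i+2):ℝ) := Mpos (i+2) (by omega)
  have e2 : a i - α ≤ 2/((m (i+1):ℝ))^2 := by
    have h1 := hAf i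
    have h2 := hge (i+1) (by omega)
    have htwoR : 2 * (m i:ℝ) ≤ (m (i+1):ℝ) := by exact_mod_cast htwo i
    have h3 : 1/(((m (i+1):ℝ) - (m i:ℝ)) * (m (i+1):ℝ)) ≤ 2/((m (i+1):ℝ))^2 := by
      rw [div_le_div_iff₀ (mul_pos (Ppos i) hM1pos) (by positivity)]
      nlinarith [Ppos i]
    linarith
  have e1 : α + 1/(3*((m (i+2):ℝ))^2) ≤ a (i+1) := by
    have hA1 := hAf (i+1)
    have hl := hαle (i+2) (by omega)
    have hfiveR : 5 * (m (i+2):ℝ) ≤ 2 * (m (i+3):ℝ) := by exact_mod_cast hfive i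
    have hnnR : (0:ℝ) ≤ (m (i+1):ℝ) := by exact_mod_cast hnn (i+1)
    have hb1 : 1/((m (i+2):ℝ) * ((m (i+3):ℝ) - (m (i+2):ℝ)))
        ≤ 2/(3*((m (i+2):ℝ))^2) := by
      rw [div_le_div_iff₀ (mul_pos hM2pos (Ppos (i+2))) (by positivity)]
      nlinarith
    have hb2 : 1/((m (i+2):ℝ))^2
        ≤ 1/(((m (i+2):ℝ) - (m (i+1):ℝ)) * (m (i+2):ℝ)) := by
      rw [div_le_div_iff₀ (by positivity) (mul_pos (Ppos (i+1)) hM2pos)]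
      nlinarith
    have hsum : 2/(3*((m (i+2):ℝ))^2) + 1/(3*((m (i+2):ℝ))^2)
        = 1/((m (i+2):ℝ))^2 := by
      field_simp
      ring
    linarith
  -- final assembly
  have hN3 : (3:ℝ) ≤ (N:ℝ) := by exact_mod_cast (he 1 le_rfl).1.trans (he 1 le_rfl).2
  have hNpos : (0:ℝ) < (N:ℝ) := by linarith
  have hxlt : x < 2/((m (i+1):ℝ))^2 := by linarith
  have hxt : x * t < (2/((m (i+1):ℝ))^2) * ((4*(N:ℝ))⁻¹^2) :=
    mul_lt_mul'' hxlt htN hx.le ht.le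
  have heq : (2/((m (i+1):ℝ))^2) * ((4*(N:ℝ))⁻¹^2)
      = 1/(8*(N:ℝ)^2*((m (i+1):ℝ))^2) := by
    field_simp
    ring
  have hM2N : (m (i+2):ℝ) ≤ (N:ℝ) * (m (i+1):ℝ) := by exact_mod_cast hNle (i+1) (by omega)
  have hstepA : 1/(8*(N:ℝ)^2*((m (i+1):ℝ))^2) ≤ 1/(8*((m (i+2):ℝ))^2) := by
    apply one_div_le_one_div_of_le (by positivity)
    nlinarith
  have hstepB : 1/(8*((m (i+2):ℝ))^2) < 1/(3*((m (i+2):ℝ))^2) := by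
    apply one_div_lt_one_div_of_lt (by positivity)
    nlinarith
  rw [heq] at hxt
  linarith
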